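/- If for each i, ∑_{j≠i} m_i m_j (b_i - b_j)/|a_i - a_j|³ = c·m_i·b_i for some constant c (the eigenvector condition), and ∑_i m_i conj(a_i) b_i = 0 (M̃-orthogonality of (a_i) and (b_i)), then ∑_{1≤i<j≤4} m_i m_j (conj(a_i)-conj(a_j))(b_i-b_j)/|a_i-a_j|³ = 0. -/

import Mathlib

open Finset Complex

theorem cross_term_vanishes (m : Fin 4 → ℝ) (a b : Fin 4 → ℂ) (c : ℂ)
    (hm : ∀ i, 0 < m i) (ha : ∀ i j, i ≠ j → a i ≠ a j)
    (heig : ∀ i, ∑ j ∈ Finset.univ.filter (· ≠ i),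
        ((m i * m j : ℝ) : ℂ) * (b i - b j) / ((‖a i - a j‖ ^ 3 : ℝ) : ℂ) =
        c * ((m i : ℝ) : ℂ) * b i)
    (horth : ∑ i, ((m i : ℝ) : ℂ) * starRingEnd ℂ (a i) * b i = 0) :
    ∑ i, ∑ j ∈ Finset.univ.filter (fun j => i < j),
        ((m i * m j : ℝ) : ℂ) * (starRingEnd ℂ (a i) - starRingEnd ℂ (a j)) * (b i - b j) /
          ((‖a i - a j‖ ^ 3 : ℝ) : ℂ) = 0 := by
  have h0 := heig 0
  have h1 := heig 1
  have h2 := heig 2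
  have h3 := heig 3
  have hsym : ∀ i j : Fin 4, ‖a i - a j‖ = ‖a j - a i‖ :=
    fun i j => norm_sub_rev _ _
  simp only [Finset.sum_filter, Fin.sum_univ_four] at h0 h1 h2 h3 horth ⊢
  simp only [ne_eq, Fin.reduceEq, Fin.reduceLT, not_false_eq_true, not_true_eq_false, reduceIte, ite_true, ite_false] at h0 h1 h2 h3 ⊢
  push_cast at h0 h1 h2 h3 horth ⊢
  rw [hsym 1 0] at h1
  rw [hsym 2 0, hsym 2 1] at h2
  rw [hsym 3 0, hsym 3 1, hsym 3 2] at h3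
  linear_combination (starRingEnd ℂ (a 0)) * h0 + (starRingEnd ℂ (a 1)) * h1 +
    (starRingEnd ℂ (a 2)) * h2 + (starRingEnd ℂ (a 3)) * h3 + c * horth
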